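/- For every n, there exists a set S of real numbers whose n-th derived set is nonempty but whose (n+1)-st derived set is empty. -/

import Mathlib

def derivedSetR (S : Set ℝ) : Set ℝ := {p : ℝ | AccPt p (Filter.principal S)}

open Filter Set Topology

lemma derivedSetR_eq_derivedSet : derivedSetR = derivedSet (X := ℝ) := rfl

lemma derivedSet_empty' : derivedSet (∅ : Set ℝ) = ∅ := by
  ext x
  simp [derivedSet, AccPt]

lemma derivedSet_singleton' (a : ℝ) : derivedSet ({a} : Set ℝ) = ∅ := by
  ext x
  simp only [mem_derivedSet, mem_empty_iff_false, iff_false]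
  rw [accPt_iff_nhds]
  intro h
  rcases eq_or_ne x a with rfl | hx
  · obtain ⟨y, ⟨-, hy⟩, hyx⟩ := h Set.univ univ_mem
    exact hyx hy
  · obtain ⟨y, ⟨hyU, hy⟩, -⟩ := h {a}ᶜ (isOpen_compl_singleton.mem_nhds hx)
    exact hyU hy

lemma derivedSet_biUnion_finset {X : Type*} [TopologicalSpace X] (s : Finset ℕ)
    (f : ℕ → Set X) :
    derivedSet (⋃ i ∈ s, f i) = ⋃ i ∈ s, derivedSet (f i) := by
  classical
  induction s using Finset.induction_on with
  | empty =>
      simp only [Finset.notMem_empty, Set.iUnion_of_empty, Set.iUnion_empty]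
      ext x; simp [derivedSet, AccPt]
  | insert _ _ h ih =>
      rename_i a s'
      simp only [Finset.mem_insert, Set.iUnion_iUnion_eq_or_left]
      rw [derivedSet_union, ih]

/-- Affine maps transport accumulation points. -/
lemma accPt_affine {a b : ℝ} (ha : a ≠ 0) {x : ℝ} {D : Set ℝ} (h : AccPt x (𝓟 D)) :
    AccPt (a * x + b) (𝓟 ((fun y => a * y + b) '' D)) := by
  have hinj : Function.Injective (fun y : ℝ => a * y + b) := by
    intro u v huv
    simp only at huv
    exact mul_left_cancel₀ ha (add_right_cancel huv)
  have := h.map (f := fun y : ℝ => a * y + b) (by fun_prop) hinj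
  simpa [Filter.map_principal] using this

lemma derivedSet_image_affine {a b : ℝ} (ha : a ≠ 0) (D : Set ℝ) :
    derivedSet ((fun y => a * y + b) '' D) = (fun y => a * y + b) '' derivedSet D := by
  ext p
  constructor
  · intro hp
    have h2 := accPt_affine (a := a⁻¹) (b := -b / a) (inv_ne_zero ha) hp
    rw [← Set.image_comp] at h2
    have hcomp : ((fun y : ℝ => a⁻¹ * y + -b / a) ∘ fun y : ℝ => a * y + b) = id := by
      funext y
      show a⁻¹ * (a * y + b) + -b / a = y
      rw [mul_add, ← mul_assoc, inv_mul_cancel₀ ha, one_mul, add_assoc, inv_mul_eq_div, ← add_div,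
        add_neg_cancel, zero_div, add_zero]
    rw [hcomp, Set.image_id] at h2
    exact ⟨a⁻¹ * p + -b / a, h2, by field_simp; ring⟩
  · rintro ⟨x, hx, rfl⟩
    exact accPt_affine ha hx

/-- The `k`-th contraction, mapping `[0,1]` into `[2⁻¹^(k+1), 2⁻¹^k]`. -/
noncomputable def gmap (k : ℕ) (x : ℝ) : ℝ := ((4 : ℝ)⁻¹) ^ (k + 1) * x + ((2 : ℝ)⁻¹) ^ (k + 1)

/-- Union of shrinking copies of `D` accumulating at `0`. -/
def Wset (D : Set ℝ) : Set ℝ := {0} ∪ ⋃ k, gmap k '' D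

lemma gmap_mem {k : ℕ} {x : ℝ} (hx : x ∈ Set.Icc (0 : ℝ) 1) :
    gmap k x ∈ Set.Icc (((2 : ℝ)⁻¹) ^ (k + 1)) (((2 : ℝ)⁻¹) ^ k) := by
  obtain ⟨hx0, hx1⟩ := hx
  have h4 : (0 : ℝ) ≤ ((4 : ℝ)⁻¹) ^ (k + 1) := by positivity
  constructor
  · have : 0 ≤ ((4 : ℝ)⁻¹) ^ (k + 1) * x := mul_nonneg h4 hx0
    simp only [gmap]; linarith
  · have h1 : ((4 : ℝ)⁻¹) ^ (k + 1) * x ≤ ((4 : ℝ)⁻¹) ^ (k + 1) := by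
      nlinarith
    have h2 : ((4 : ℝ)⁻¹) ^ (k + 1) ≤ ((2 : ℝ)⁻¹) ^ (k + 1) := by
      apply pow_le_pow_left₀ (by norm_num) (by norm_num)
    have h3 : ((2 : ℝ)⁻¹) ^ (k + 1) + ((2 : ℝ)⁻¹) ^ (k + 1) = ((2 : ℝ)⁻¹) ^ k := by
      ring
    simp only [gmap]; linarith

lemma gmap_mem_Icc01 {k : ℕ} {x : ℝ} (hx : x ∈ Set.Icc (0 : ℝ) 1) :
    gmap k x ∈ Set.Icc (0 : ℝ) 1 := by
  obtain ⟨h1, h2⟩ := gmap_mem (k := k) hx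
  constructor
  · have : (0:ℝ) < ((2 : ℝ)⁻¹) ^ (k + 1) := by positivity
    linarith
  · calc gmap k x ≤ ((2 : ℝ)⁻¹) ^ k := h2
      _ ≤ 1 := pow_le_one₀ (by norm_num) (by norm_num)

lemma Wset_subset_Icc {D : Set ℝ} (hD : D ⊆ Set.Icc (0 : ℝ) 1) :
    Wset D ⊆ Set.Icc (0 : ℝ) 1 := by
  rintro p (hp | hp)
  · simp only [Set.mem_singleton_iff] at hp
    subst hp; constructor <;> norm_num
  · simp only [Set.mem_iUnion, Set.mem_image] at hp
    obtain ⟨k, x, hx, rfl⟩ := hp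
    exact gmap_mem_Icc01 (hD hx)

lemma derivedSet_subset_Icc {D : Set ℝ} (hD : D ⊆ Set.Icc (0 : ℝ) 1) :
    derivedSet D ⊆ Set.Icc (0 : ℝ) 1 :=
  (derivedSet_subset_closure D).trans (closure_minimal hD isClosed_Icc)

lemma gmap_eq_affine (k : ℕ) : gmap k = fun y : ℝ => ((4 : ℝ)⁻¹) ^ (k + 1) * y + ((2 : ℝ)⁻¹) ^ (k + 1) := rfl

lemma four_pow_ne (k : ℕ) : (((4 : ℝ)⁻¹) ^ (k + 1)) ≠ 0 := by positivity

/-- Key structural lemma: the derived set of `Wset D`. -/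
lemma derivedSet_Wset {D : Set ℝ} (hD : D ⊆ Set.Icc (0 : ℝ) 1) (hne : D.Nonempty) :
    derivedSet (Wset D) = Wset (derivedSet D) := by
  apply Set.Subset.antisymm
  · intro p hp
    rcases eq_or_ne p 0 with rfl | hp0
    · exact Or.inl rfl
    have hpIcc : p ∈ Set.Icc (0:ℝ) 1 := derivedSet_subset_Icc (Wset_subset_Icc hD) hp
    have hppos : 0 < p := lt_of_le_of_ne hpIcc.1 (Ne.symm hp0)
    obtain ⟨N, hN⟩ : ∃ N : ℕ, ((2:ℝ)⁻¹) ^ N < p := exists_pow_lt_of_lt_one hppos (by norm_num)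
    have hsub : Wset D ⊆ (⋃ k ∈ Finset.range N, gmap k '' D) ∪ Set.Icc (0:ℝ) (((2:ℝ)⁻¹)^N) := by
      rintro q (hq | hq)
      · right; simp only [Set.mem_singleton_iff] at hq; subst hq
        exact ⟨le_refl 0, by positivity⟩
      · simp only [Set.mem_iUnion, Set.mem_image] at hq
        obtain ⟨k, x, hx, rfl⟩ := hq
        rcases lt_or_ge k N with hk | hk
        · left
          exact Set.mem_biUnion (Finset.mem_range.mpr hk) ⟨x, hx, rfl⟩
        · right
          have h1 := gmap_mem (k := k) (hD hx)
          have h2 : ((2:ℝ)⁻¹)^k ≤ ((2:ℝ)⁻¹)^N :=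
            pow_le_pow_of_le_one (by norm_num) (by norm_num) hk
          have h0 : (0:ℝ) ≤ ((2:ℝ)⁻¹)^(k+1) := by positivity
          exact ⟨le_trans h0 h1.1, le_trans h1.2 h2⟩
    have hp2 := derivedSet_mono _ _ hsub hp
    rw [derivedSet_union, derivedSet_biUnion_finset] at hp2
    rcases hp2 with hp2 | hp2
    · simp only [Set.mem_iUnion] at hp2
      obtain ⟨k, -, hk⟩ := hp2
      right
      refine Set.mem_iUnion.mpr ⟨k, ?_⟩
      rw [gmap_eq_affine k] at hk ⊢
      rwa [derivedSet_image_affine (four_pow_ne k)] at hk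
    · exfalso
      have hcl := derivedSet_subset_closure _ hp2
      rw [isClosed_Icc.closure_eq] at hcl
      linarith [hcl.2]
  · rintro p (hp | hp)
    · simp only [Set.mem_singleton_iff] at hp; subst hp
      obtain ⟨x0, hx0⟩ := hne
      rw [mem_derivedSet, accPt_iff_nhds]
      intro U hU
      obtain ⟨ε, hε, hball⟩ := Metric.mem_nhds_iff.mp hU
      obtain ⟨k, hk⟩ : ∃ k : ℕ, ((2:ℝ)⁻¹)^k < ε := exists_pow_lt_of_lt_one hε (by norm_num)
      have h := gmap_mem (k := k) (hD hx0)
      have h0 : (0:ℝ) < ((2:ℝ)⁻¹)^(k+1) := by positivity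
      refine ⟨gmap k x0, ⟨?_, ?_⟩, ?_⟩
      · apply hball
        rw [Metric.mem_ball, Real.dist_eq, sub_zero, abs_of_nonneg (by linarith [h.1])]
        linarith [h.2]
      · exact Or.inr (Set.mem_iUnion.mpr ⟨k, ⟨x0, hx0, rfl⟩⟩)
      · intro hc; rw [hc] at h; linarith [h.1]
    · simp only [Set.mem_iUnion, Set.mem_image] at hp
      obtain ⟨k, x, hx, rfl⟩ := hp
      have hacc : AccPt (gmap k x) (𝓟 (gmap k '' D)) := by
        rw [gmap_eq_affine k]
        exact accPt_affine (four_pow_ne k) hx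
      exact hacc.mono (principal_mono.mpr (fun q hq => Or.inr (Set.mem_iUnion.mpr ⟨k, hq⟩)))

lemma derivedSet_iterate_subset_Icc {D : Set ℝ} (hD : D ⊆ Set.Icc (0:ℝ) 1) (m : ℕ) :
    derivedSet^[m] D ⊆ Set.Icc (0:ℝ) 1 := by
  induction m with
  | zero => simpa
  | succ m ih => rw [Function.iterate_succ_apply']; exact derivedSet_subset_Icc ih

lemma iterate_nonempty_of_succ {D : Set ℝ} {m : ℕ} (h : (derivedSet^[m+1] D).Nonempty) :
    (derivedSet^[m] D).Nonempty := by
  by_contra hc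
  rw [Set.not_nonempty_iff_eq_empty] at hc
  rw [Function.iterate_succ_apply', hc, derivedSet_empty'] at h
  exact Set.not_nonempty_empty h

lemma derivedSet_iterate_Wset {D : Set ℝ} (hD : D ⊆ Set.Icc (0:ℝ) 1) :
    ∀ m, (derivedSet^[m] D).Nonempty → derivedSet^[m] (Wset D) = Wset (derivedSet^[m] D) := by
  intro m
  induction m with
  | zero => intro _; rfl
  | succ m ih =>
      intro hne
      have hm : (derivedSet^[m] D).Nonempty := iterate_nonempty_of_succ hne
      rw [Function.iterate_succ_apply', Function.iterate_succ_apply', ih hm,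
        derivedSet_Wset (derivedSet_iterate_subset_Icc hD m) hm]

noncomputable def Sfam : ℕ → Set ℝ
  | 0 => {0}
  | n+1 => Wset (Sfam n)

lemma zero_mem_Icc01 : ({0} : Set ℝ) ⊆ Set.Icc (0:ℝ) 1 :=
  Set.singleton_subset_iff.mpr (by norm_num)

lemma Sfam_spec : ∀ n, Sfam n ⊆ Set.Icc (0:ℝ) 1 ∧ derivedSet^[n] (Sfam n) = {0} := by
  intro n
  induction n with
  | zero => exact ⟨zero_mem_Icc01, rfl⟩
  | succ n ih =>
      obtain ⟨hsub, hder⟩ := ih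
      have hW : Sfam (n+1) = Wset (Sfam n) := rfl
      refine ⟨hW ▸ Wset_subset_Icc hsub, ?_⟩
      have hne : (derivedSet^[n] (Sfam n)).Nonempty := by rw [hder]; exact ⟨0, rfl⟩
      rw [Function.iterate_succ_apply', hW,
        derivedSet_iterate_Wset hsub n hne, hder,
        derivedSet_Wset zero_mem_Icc01 ⟨0, rfl⟩, derivedSet_singleton']
      simp [Wset]

theorem exists_set_with_nth_derived_nonempty_and_next_empty (n : ℕ) :
    ∃ S : Set ℝ, (derivedSetR^[n] S).Nonempty ∧ derivedSetR^[n + 1] S = ∅ := by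
  refine ⟨Sfam n, ?_, ?_⟩
  · rw [derivedSetR_eq_derivedSet, (Sfam_spec n).2]
    exact ⟨0, rfl⟩
  · rw [derivedSetR_eq_derivedSet, Function.iterate_succ_apply', (Sfam_spec n).2,
      derivedSet_singleton']
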